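/- Fix an integer d ≥ 1 and δ ∈ (0,1), and let M^{D_d} be the maximal operator taking suprema of averages over intervals in the union D_d of the 2d grids D_{d,b,α} (b = 0,...,d−1, α = ±(2^d+1)^{-1}). Then for every measurable U ⊂ ℝ of finite measure, |{ M^{D_d} 1_U > 1−δ }| ≤ (1 + 2d[(1−δ)^{-1} − 1]) |U|. -/

import Mathlib

open MeasureTheory

/-- Membership in the shifted dyadic grid `D_{d,b,α}`. -/
def memShiftedGrid (d b : ℕ) (α : ℝ) (I : Set ℝ) : Prop :=
  ∃ k j : ℤ, I = Set.Ioo ((2 : ℝ) ^ (k * d + b) * ((j : ℝ) + (-1 : ℝ) ^ k * α))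
      ((2 : ℝ) ^ (k * d + b) * (1 + (j : ℝ) + (-1 : ℝ) ^ k * α))

/-- Membership in the full shifted collection `D_d`, a union of `2d` grids. -/
def memShiftedFamily (d : ℕ) (I : Set ℝ) : Prop :=
  ∃ b : ℕ, b < d ∧ ∃ α : ℝ,
    (α = ((2 : ℝ) ^ d + 1)⁻¹ ∨ α = -((2 : ℝ) ^ d + 1)⁻¹) ∧ memShiftedGrid d b α I

namespace Hankel7Aux

/-- side length of a scale-`k` interval -/
noncomputable def s (d b : ℕ) (k : ℤ) : ℝ := (2:ℝ) ^ (k * (d:ℤ) + (b:ℤ))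

/-- left endpoint of a grid interval -/
noncomputable def L (d b : ℕ) (α : ℝ) (k j : ℤ) : ℝ := s d b k * ((j:ℝ) + (-1:ℝ)^k * α)

/-- the grid interval -/
def Iv (d b : ℕ) (α : ℝ) (k j : ℤ) : Set ℝ :=
  Set.Ioo (L d b α k j) (L d b α k j + s d b k)

lemma s_pos (d b : ℕ) (k : ℤ) : 0 < s d b k := zpow_pos (by norm_num) _

lemma L_lt_L (d b : ℕ) (α : ℝ) (k : ℤ) {a c : ℤ} : L d b α k a < L d b α k c ↔ a < c := by
  unfold L
  rw [mul_lt_mul_iff_right₀ (s_pos d b k), add_lt_add_iff_right, Int.cast_lt]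

lemma L_le_L (d b : ℕ) (α : ℝ) (k : ℤ) {a c : ℤ} (h : a ≤ c) : L d b α k a ≤ L d b α k c := by
  rcases eq_or_lt_of_le h with h' | h'
  · rw [h']
  · exact le_of_lt ((L_lt_L d b α k).mpr h')

lemma L_succ (d b : ℕ) (α : ℝ) (k j : ℤ) : L d b α k (j+1) = L d b α k j + s d b k := by
  unfold L; push_cast; ring

lemma mem_Iv (d b : ℕ) (α : ℝ) (k j : ℤ) (x : ℝ) :
    x ∈ Iv d b α k j ↔ L d b α k j < x ∧ x < L d b α k (j+1) := by
  unfold Iv; rw [Set.mem_Ioo, L_succ]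

lemma Iv_eq (d b : ℕ) (α : ℝ) (k j : ℤ) :
    Set.Ioo ((2 : ℝ) ^ (k * d + b) * ((j : ℝ) + (-1 : ℝ) ^ k * α))
      ((2 : ℝ) ^ (k * d + b) * (1 + (j : ℝ) + (-1 : ℝ) ^ k * α)) = Iv d b α k j := by
  unfold Iv L s
  congr 1
  ring

lemma dvd_key (d n : ℕ) : ((2:ℤ)^d + 1) ∣ (2^(n*d) * (-1)^n - 1) := by
  have h1 : (2:ℤ)^d ≡ -1 [ZMOD ((2:ℤ)^d + 1)] := by
    refine Int.ModEq.symm ?_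
    rw [Int.modEq_iff_dvd]
    exact ⟨1, by ring⟩
  have h2 : (2:ℤ)^(n*d) * (-1)^n ≡ 1 [ZMOD ((2:ℤ)^d + 1)] := by
    calc (2:ℤ)^(n*d) * (-1)^n = (2^d)^n * (-1)^n := by rw [← pow_mul, Nat.mul_comm]
      _ ≡ (-1)^n * (-1)^n [ZMOD ((2:ℤ)^d + 1)] := Int.ModEq.mul_right _ (h1.pow n)
      _ = 1 := by rw [← mul_pow]; norm_num
  have h3 := h2.dvd
  exact dvd_sub_comm.mp h3

lemma exists_lattice (d b : ℕ) (α : ℝ)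
    (hα : α = ((2:ℝ)^d + 1)⁻¹ ∨ α = -((2:ℝ)^d + 1)⁻¹)
    (k k' j' : ℤ) (hk : k ≤ k') :
    ∃ m : ℤ, L d b α k' j' = L d b α k m ∧
      L d b α k' j' + s d b k' = L d b α k (m + 2^((k'-k).toNat * d)) := by
  set n := (k'-k).toNat with hn
  have hk' : k' = k + n := by
    have := Int.toNat_of_nonneg (sub_nonneg.mpr hk)
    omega
  obtain ⟨t, ht⟩ := dvd_key d n
  have h2pos : (0:ℝ) < (2:ℝ)^d + 1 := by positivity
  have hX : (2:ℝ)^(n*d) * (-1:ℝ)^n - 1 = ((2:ℝ)^d + 1) * (t:ℝ) := by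
    exact_mod_cast congrArg (fun z : ℤ => (z:ℝ)) ht
  have hc : ∃ c : ℤ, (c:ℝ) = (-1:ℝ)^k * α * ((2:ℝ)^(n*d) * (-1:ℝ)^n - 1) := by
    rcases Int.even_or_odd k with he | he <;> rcases hα with h | h
    · exact ⟨t, by rw [he.neg_one_zpow, hX, h]; push_cast; field_simp; try ring⟩
    · exact ⟨-t, by rw [he.neg_one_zpow, hX, h]; push_cast; field_simp; try ring⟩
    · exact ⟨-t, by rw [he.neg_one_zpow, hX, h]; push_cast; field_simp; try ring⟩
    · exact ⟨t, by rw [he.neg_one_zpow, hX, h]; push_cast; field_simp; try ring⟩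
  obtain ⟨c, hcv⟩ := hc
  have hsplit : s d b k' = s d b k * (2:ℝ)^(n*d) := by
    unfold s
    rw [← zpow_natCast (2:ℝ) (n*d), ← zpow_add₀ (two_ne_zero)]
    congr 1
    rw [hk']
    push_cast
    ring
  have hσ : (-1:ℝ)^k' = (-1:ℝ)^k * (-1:ℝ)^n := by
    rw [hk', zpow_add₀ (by norm_num : (-1:ℝ) ≠ 0), zpow_natCast]
  refine ⟨2^(n*d) * j' + c, ?_, ?_⟩
  · unfold L
    rw [hsplit, hσ]
    push_cast
    linear_combination (-(s d b k)) * hcv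
  · unfold L
    rw [hsplit, hσ]
    push_cast
    linear_combination (-(s d b k)) * hcv

lemma Iv_subset (d b : ℕ) (α : ℝ)
    (hα : α = ((2:ℝ)^d + 1)⁻¹ ∨ α = -((2:ℝ)^d + 1)⁻¹)
    {k j k' j' : ℤ} (hk : k ≤ k')
    (hne : (Iv d b α k j ∩ Iv d b α k' j').Nonempty) :
    Iv d b α k j ⊆ Iv d b α k' j' := by
  obtain ⟨m, h1, h2⟩ := exists_lattice d b α hα k k' j' hk
  set P : ℤ := 2^((k'-k).toNat * d) with hP
  obtain ⟨x, hx1, hx2⟩ := hne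
  have hIv' : Iv d b α k' j' = Set.Ioo (L d b α k m) (L d b α k (m + P)) := by
    unfold Iv
    rw [h2, h1]
  have hxI : x ∈ Set.Ioo (L d b α k m) (L d b α k (m+P)) := by rw [← hIv']; exact hx2
  have hxJ := (mem_Iv d b α k j x).mp hx1
  have hm : m ≤ j := by
    have := (L_lt_L d b α k (a := m) (c := j+1)).mp (lt_trans hxI.1 hxJ.2)
    omega
  have hM : j + 1 ≤ m + P := by
    have := (L_lt_L d b α k (a := j) (c := m+P)).mp (lt_trans hxJ.1 hxI.2)
    omega
  rw [hIv']
  intro y hy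
  have hy' := (mem_Iv d b α k j y).mp hy
  exact ⟨lt_of_le_of_lt (L_le_L d b α k hm) hy'.1,
    lt_of_lt_of_le hy'.2 (L_le_L d b α k hM)⟩

lemma Iv_same (d b : ℕ) (α : ℝ) {k j j' : ℤ}
    (hne : (Iv d b α k j ∩ Iv d b α k j').Nonempty) : j = j' := by
  obtain ⟨x, hx1, hx2⟩ := hne
  have h1 := (mem_Iv d b α k j x).mp hx1
  have h2 := (mem_Iv d b α k j' x).mp hx2
  have a1 := (L_lt_L d b α k (a := j) (c := j'+1)).mp (lt_trans h1.1 h2.2)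
  have a2 := (L_lt_L d b α k (a := j') (c := j+1)).mp (lt_trans h2.1 h1.2)
  omega

lemma grid_bound (d b : ℕ) (hd : 1 ≤ d) (α : ℝ)
    (hα : α = ((2:ℝ)^d + 1)⁻¹ ∨ α = -((2:ℝ)^d + 1)⁻¹)
    (δ : ℝ) (hδ0 : 0 < δ) (hδ1 : δ < 1)
    (U : Set ℝ) (hU : MeasurableSet U) (hUfin : volume U < ⊤) :
    volume ({x : ℝ | ∃ k j : ℤ,
        (ENNReal.ofReal (1 - δ) * volume (Iv d b α k j) < volume (U ∩ Iv d b α k j)) ∧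
        x ∈ Iv d b α k j} \ U)
      ≤ ENNReal.ofReal (δ / (1 - δ)) * volume U := by
  have h1δ : 0 < 1 - δ := by linarith
  set good : ℤ × ℤ → Prop := fun p =>
    ENNReal.ofReal (1 - δ) * volume (Iv d b α p.1 p.2) < volume (U ∩ Iv d b α p.1 p.2)
    with hgood
  have hvol : ∀ k j : ℤ, volume (Iv d b α k j) = ENNReal.ofReal (s d b k) := by
    intro k j
    unfold Iv
    rw [Real.volume_Ioo]
    congr 1
    ring
  -- scale bound
  set C : ℝ := ((volume U).toReal + 1) / (1 - δ) with hC
  obtain ⟨K, hK⟩ := pow_unbounded_of_one_lt C (one_lt_two (α := ℝ))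
  have hscale : ∀ p : ℤ × ℤ, good p → p.1 ≤ (K:ℤ) := by
    rintro ⟨k, j⟩ hg
    by_contra hlt
    push_neg at hlt
    have h1 : ENNReal.ofReal ((1-δ) * s d b k) ≤ volume U := by
      rw [ENNReal.ofReal_mul h1δ.le, ← hvol k j]
      exact le_trans (le_of_lt hg) (measure_mono Set.inter_subset_left)
    have h2 : (1-δ) * s d b k ≤ (volume U).toReal :=
      (ENNReal.ofReal_le_iff_le_toReal hUfin.ne).mp h1
    have h3 : s d b k ≤ C := by
      rw [hC, le_div_iff₀ h1δ]
      nlinarith [s_pos d b k]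
    have hKk : (K:ℤ) < k := hlt
    have h4 : (2:ℝ)^(K:ℤ) < s d b k := by
      unfold s
      apply zpow_lt_zpow_right₀ one_lt_two
      have hdz : (1:ℤ) ≤ (d:ℤ) := by exact_mod_cast hd
      have hk0 : (0:ℤ) ≤ k := by omega
      nlinarith [Int.ofNat_nonneg b]
    have h5 : C < (2:ℝ)^(K:ℤ) := by
      rw [zpow_natCast]
      exact hK
    linarith
  -- maximal good intervals
  set M : Set (ℤ × ℤ) := {p | good p ∧ ∀ q, good q →
      Iv d b α p.1 p.2 ⊆ Iv d b α q.1 q.2 → q.1 ≤ p.1} with hM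
  have hmax : ∀ p : ℤ × ℤ, good p → ∃ q ∈ M, Iv d b α p.1 p.2 ⊆ Iv d b α q.1 q.2 := by
    intro p hp
    set P : ℤ → Prop := fun k' => ∃ j', good (k', j') ∧
      Iv d b α p.1 p.2 ⊆ Iv d b α k' j' with hPdef
    have hbdd : ∃ bb : ℤ, ∀ z, P z → z ≤ bb :=
      ⟨K, fun z hz => by obtain ⟨j', hg', _⟩ := hz; exact hscale (z, j') hg'⟩
    have hne : ∃ z, P z := ⟨p.1, p.2, hp, subset_rfl⟩
    obtain ⟨k₀, ⟨j₀, hg₀, hsub₀⟩, hub⟩ := Int.exists_greatest_of_bdd hbdd hne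
    refine ⟨(k₀, j₀), ⟨hg₀, ?_⟩, hsub₀⟩
    intro q hq hqsub
    exact hub q.1 ⟨q.2, hq, hsub₀.trans hqsub⟩
  have hdisjIv : M.Pairwise (fun p q => Disjoint (Iv d b α p.1 p.2) (Iv d b α q.1 q.2)) := by
    have haux : ∀ p ∈ M, ∀ q ∈ M, p.1 ≤ q.1 →
        ¬ Disjoint (Iv d b α p.1 p.2) (Iv d b α q.1 q.2) → p = q := by
      intro p hp q hq hle hnd
      have hne' : (Iv d b α p.1 p.2 ∩ Iv d b α q.1 q.2).Nonempty :=
        Set.not_disjoint_iff_nonempty_inter.mp hnd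
      have hsub := Iv_subset d b α hα hle hne'
      have h1 : q.1 ≤ p.1 := hp.2 q hq.1 hsub
      have hkeq : p.1 = q.1 := le_antisymm hle h1
      have hjeq : p.2 = q.2 := by
        apply Iv_same d b α (k := p.1) (j := p.2) (j' := q.2)
        rw [hkeq] at hne' ⊢
        exact hne'
      exact Prod.ext hkeq hjeq
    intro p hp q hq hpq
    by_contra hnd
    rcases le_total p.1 q.1 with h | h
    · exact hpq (haux p hp q hq h hnd)
    · exact hpq ((haux q hq p hp h (fun hD => hnd hD.symm)).symm)
  have hcover : {x : ℝ | ∃ k j : ℤ,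
        (ENNReal.ofReal (1 - δ) * volume (Iv d b α k j) < volume (U ∩ Iv d b α k j)) ∧
        x ∈ Iv d b α k j} \ U ⊆ ⋃ p ∈ M, (Iv d b α p.1 p.2 \ U) := by
    rintro x ⟨⟨k, j, hg, hx⟩, hxU⟩
    obtain ⟨q, hqM, hsub⟩ := hmax (k, j) hg
    exact Set.mem_biUnion hqM ⟨hsub hx, hxU⟩
  have hMcount : M.Countable := Set.to_countable M
  -- per-interval bound
  have hper : ∀ p : ℤ × ℤ, good p →
      volume (Iv d b α p.1 p.2 \ U) ≤
        ENNReal.ofReal (δ / (1 - δ)) * volume (U ∩ Iv d b α p.1 p.2) := by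
    rintro ⟨k, j⟩ hg
    have hg' : ENNReal.ofReal (1 - δ) * volume (Iv d b α k j)
        < volume (U ∩ Iv d b α k j) := hg
    set I := Iv d b α k j with hI
    have hIm : MeasurableSet I := measurableSet_Ioo
    have hIfin : volume I < ⊤ := by rw [hvol]; exact ENNReal.ofReal_lt_top
    set A := volume (U ∩ I) with hA
    set B := volume I with hB
    have hAB : A ≤ B := measure_mono Set.inter_subset_right
    have hAfin : A ≠ ⊤ := (lt_of_le_of_lt hAB hIfin).ne
    have hdiffI : volume (I \ U) = B - A := by
      have heq : I \ U = I \ (U ∩ I) := by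
        ext y; constructor
        · rintro ⟨h1, h2⟩; exact ⟨h1, fun h => h2 h.1⟩
        · rintro ⟨h1, h2⟩; exact ⟨h1, fun h => h2 ⟨h, h1⟩⟩
      rw [heq, measure_diff Set.inter_subset_right (hU.inter hIm).nullMeasurableSet hAfin]
    have hr : (1-δ) * B.toReal < A.toReal := by
      have hg2 : ENNReal.ofReal ((1-δ) * B.toReal) < A := by
        rw [ENNReal.ofReal_mul h1δ.le, ENNReal.ofReal_toReal hIfin.ne]
        exact hg'
      exact (ENNReal.ofReal_lt_iff_lt_toReal (by positivity) hAfin).mp hg2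
    have hBr : 0 ≤ B.toReal := ENNReal.toReal_nonneg
    have hAr : 0 ≤ A.toReal := ENNReal.toReal_nonneg
    have key : B.toReal - A.toReal ≤ (δ / (1 - δ)) * A.toReal := by
      rw [div_mul_eq_mul_div, le_div_iff₀ h1δ]
      nlinarith
    calc volume (I \ U) = ENNReal.ofReal (B.toReal - A.toReal) := by
          rw [hdiffI, ENNReal.ofReal_sub _ hAr, ENNReal.ofReal_toReal hIfin.ne,
            ENNReal.ofReal_toReal hAfin]
      _ ≤ ENNReal.ofReal ((δ / (1 - δ)) * A.toReal) := ENNReal.ofReal_le_ofReal key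
      _ = ENNReal.ofReal (δ / (1 - δ)) * A := by
          rw [ENNReal.ofReal_mul (by positivity), ENNReal.ofReal_toReal hAfin]
  -- assemble
  have hdisjUI : M.PairwiseDisjoint (fun p : ℤ × ℤ => U ∩ Iv d b α p.1 p.2) := by
    intro p hp q hq hpq
    exact (hdisjIv hp hq hpq).mono Set.inter_subset_right Set.inter_subset_right
  calc volume ({x : ℝ | ∃ k j : ℤ,
        (ENNReal.ofReal (1 - δ) * volume (Iv d b α k j) < volume (U ∩ Iv d b α k j)) ∧
        x ∈ Iv d b α k j} \ U)
      ≤ volume (⋃ p ∈ M, (Iv d b α p.1 p.2 \ U)) := measure_mono hcover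
    _ ≤ ∑' p : M, volume (Iv d b α (p:ℤ×ℤ).1 (p:ℤ×ℤ).2 \ U) :=
        measure_biUnion_le volume hMcount _
    _ ≤ ∑' p : M, ENNReal.ofReal (δ / (1 - δ)) * volume (U ∩ Iv d b α (p:ℤ×ℤ).1 (p:ℤ×ℤ).2) :=
        ENNReal.tsum_le_tsum (fun p => hper p p.2.1)
    _ = ENNReal.ofReal (δ / (1 - δ)) * ∑' p : M, volume (U ∩ Iv d b α (p:ℤ×ℤ).1 (p:ℤ×ℤ).2) :=
        ENNReal.tsum_mul_left
    _ = ENNReal.ofReal (δ / (1 - δ)) * volume (⋃ p ∈ M, (U ∩ Iv d b α p.1 p.2)) := by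
        rw [measure_biUnion hMcount hdisjUI
          (fun p _ => hU.inter measurableSet_Ioo)]
    _ ≤ ENNReal.ofReal (δ / (1 - δ)) * volume U := by
        apply mul_le_mul_right
        apply measure_mono
        exact Set.iUnion₂_subset (fun p _ => Set.inter_subset_left)

end Hankel7Aux

open Hankel7Aux in
theorem hankel_stmt7 (d : ℕ) (hd : 1 ≤ d) (δ : ℝ) (hδ : δ ∈ Set.Ioo (0 : ℝ) 1)
    (U : Set ℝ) (hU : MeasurableSet U) (hUfin : volume U < ⊤) :
    volume {x : ℝ | ∃ I : Set ℝ, memShiftedFamily d I ∧ x ∈ I ∧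
        ENNReal.ofReal (1 - δ) * volume I < volume (U ∩ I)} ≤
      ENNReal.ofReal (1 + 2 * d * ((1 - δ)⁻¹ - 1)) * volume U := by
  obtain ⟨hδ0, hδ1⟩ := hδ
  have h1δ : 0 < 1 - δ := by linarith
  set c : ENNReal := ENNReal.ofReal (δ / (1 - δ)) with hc
  set F : ℕ → ℝ → Set ℝ := fun b α => {x : ℝ | ∃ k j : ℤ,
      (ENNReal.ofReal (1 - δ) * volume (Iv d b α k j) < volume (U ∩ Iv d b α k j)) ∧
      x ∈ Iv d b α k j} with hF
  have hEsub : {x : ℝ | ∃ I : Set ℝ, memShiftedFamily d I ∧ x ∈ I ∧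
        ENNReal.ofReal (1 - δ) * volume I < volume (U ∩ I)} ⊆
      U ∪ ⋃ b ∈ Finset.range d,
        ((F b ((2^d+1)⁻¹) \ U) ∪ (F b (-((2^d+1)⁻¹)) \ U)) := by
    intro x hx
    by_cases hxU : x ∈ U
    · exact Or.inl hxU
    right
    obtain ⟨I, ⟨b, hb, α, hαor, k, j, hI⟩, hxI, hcond⟩ := hx
    have hIe : I = Iv d b α k j := by rw [hI, Iv_eq]
    refine Set.mem_biUnion (Finset.mem_range.mpr hb) ?_
    rcases hαor with h | h
    · left
      refine ⟨⟨k, j, ?_, ?_⟩, hxU⟩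
      · rw [← h, ← hIe]; exact hcond
      · rw [← h, ← hIe]; exact hxI
    · right
      refine ⟨⟨k, j, ?_, ?_⟩, hxU⟩
      · rw [← h, ← hIe]; exact hcond
      · rw [← h, ← hIe]; exact hxI
  have hgb : ∀ b : ℕ, ∀ α : ℝ, (α = ((2:ℝ)^d + 1)⁻¹ ∨ α = -((2:ℝ)^d + 1)⁻¹) →
      volume (F b α \ U) ≤ c * volume U := by
    intro b α hα
    exact grid_bound d b hd α hα δ hδ0 hδ1 U hU hUfin
  calc volume {x : ℝ | ∃ I : Set ℝ, memShiftedFamily d I ∧ x ∈ I ∧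
        ENNReal.ofReal (1 - δ) * volume I < volume (U ∩ I)}
      ≤ volume (U ∪ ⋃ b ∈ Finset.range d,
          ((F b ((2^d+1)⁻¹) \ U) ∪ (F b (-((2^d+1)⁻¹)) \ U))) := measure_mono hEsub
    _ ≤ volume U + volume (⋃ b ∈ Finset.range d,
          ((F b ((2^d+1)⁻¹) \ U) ∪ (F b (-((2^d+1)⁻¹)) \ U))) := measure_union_le _ _
    _ ≤ volume U + ∑ b ∈ Finset.range d,
          volume ((F b ((2^d+1)⁻¹) \ U) ∪ (F b (-((2^d+1)⁻¹)) \ U)) := by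
        gcongr
        exact measure_biUnion_finset_le _ _
    _ ≤ volume U + ∑ b ∈ Finset.range d, (c * volume U + c * volume U) := by
        gcongr with b hb
        exact le_trans (measure_union_le _ _)
          (add_le_add (hgb b _ (Or.inl rfl)) (hgb b _ (Or.inr rfl)))
    _ = volume U + (d : ENNReal) * (c * volume U + c * volume U) := by
        rw [Finset.sum_const, Finset.card_range, nsmul_eq_mul]
    _ ≤ ENNReal.ofReal (1 + 2 * d * ((1 - δ)⁻¹ - 1)) * volume U := by
        have hinv : (1 - δ)⁻¹ - 1 = δ / (1 - δ) := by
          field_simp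
          ring
        rw [hinv]
        have hofadd : ENNReal.ofReal (1 + 2 * (d:ℝ) * (δ / (1 - δ)))
            = 1 + 2 * (d : ENNReal) * c := by
          rw [ENNReal.ofReal_add (by norm_num) (by positivity), ENNReal.ofReal_one]
          congr 1
          rw [ENNReal.ofReal_mul (by positivity), hc]
          congr 1
          rw [show (2 * (d:ℝ)) = ((2*d : ℕ) : ℝ) by push_cast; ring,
            ENNReal.ofReal_natCast]
          push_cast
          ring
        rw [hofadd]
        apply le_of_eq
        ring
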